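/- Let (G,κ) be a proper edge coloring of a tree that presents a generalized toggle group. Then for every path v_0, v_1, …, v_ℓ in G with ℓ ≥ 2 (distinct vertices with consecutive vertices adjacent), the word κ({v_0,v_1}) κ({v_1,v_2}) ⋯ κ({v_{ℓ−1},v_ℓ}) of edge colors along the path is a toggle word. -/

import Mathlib

open scoped Classical

/-- A proper edge coloring of a finite simple graph `G` with colors `{1, …, k}`:
it assigns colors in `{1, …, k}` to edges, is surjective onto `{1, …, k}`, and
incident edges receive distinct colors. -/
def IsProperEdgeColoring {V : Type*} (G : SimpleGraph V) (k : ℕ) (κ : Sym2 V → ℕ) : Prop :=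
  (∀ e ∈ G.edgeSet, κ e ∈ Finset.Icc 1 k) ∧
  (∀ a ∈ Finset.Icc 1 k, ∃ e ∈ G.edgeSet, κ e = a) ∧
  (∀ u v w : V, G.Adj u v → G.Adj u w → v ≠ w → κ s(u, v) ≠ κ s(u, w))
/-- The toggle `τ_e` acting on subsets: `τ_e X = X ∆ {e}` (that is, `X ∪ {e}` if `e ∉ X`,
and `X \ {e}` if `e ∈ X`) whenever the result lies in `L`, and `τ_e X = X` otherwise. -/
noncomputable def toggle {E : Type*} [DecidableEq E] (L : Set (Finset E)) (e : E)
    (X : Finset E) : Finset E :=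
  if symmDiff X {e} ∈ L then symmDiff X {e} else X
/-- `(G,κ)` *presents a generalized toggle group* if there are a finite set `E'`, a
family `L` of subsets of `E'`, a bijection `φ` from the vertices of `G` to `L`, and an
injection `c` from the colors `{1, …, k}` to `E'`, such that `{i,j}` is an edge of `G`
colored `a` iff `φ i ≠ φ j` and `φ j = τ_{c a}(φ i)`. -/
def PresentsToggleGroup {V : Type*} (G : SimpleGraph V) (k : ℕ) (κ : Sym2 V → ℕ) : Prop :=
  ∃ (E' : Type) (_ : Fintype E') (_ : DecidableEq E') (L : Set (Finset E'))
    (φ : V → Finset E') (c : ℕ → E'),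
    (∀ v : V, φ v ∈ L) ∧ (∀ X ∈ L, ∃ v : V, φ v = X) ∧ Function.Injective φ ∧
    Set.InjOn c (Set.Icc 1 k) ∧
    (∀ (i j : V) (a : ℕ), 1 ≤ a → a ≤ k →
      ((G.Adj i j ∧ κ s(i, j) = a) ↔ (φ i ≠ φ j ∧ φ j = toggle L (c a) (φ i))))
/-- A word over the alphabet of colors is a *toggle word* if every contiguous subword of
length at least 2 contains at least two distinct letters each occurring an odd number of
times in that subword. -/
def IsToggleWord (w : List ℕ) : Prop :=
  ∀ i j : ℕ, 2 ≤ ((w.drop i).take j).length →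
    ∃ a b : ℕ, a ≠ b ∧ Odd (((w.drop i).take j).count a) ∧ Odd (((w.drop i).take j).count b)

section Aux

variable {V : Type*} {G : SimpleGraph V}

/-- The walk consisting of the first `n` edges of `p`. -/
def wtake : {u v : V} → (p : G.Walk u v) → (n : ℕ) → G.Walk u (p.getVert n)
  | _, _, .nil, _ => .nil
  | _, _, .cons _ _, 0 => .nil
  | _, _, .cons h q, n + 1 => .cons h (wtake q n)

/-- The walk obtained from `p` by removing the first `n` edges. -/
def wdrop : {u v : V} → (p : G.Walk u v) → (n : ℕ) → G.Walk (p.getVert n) v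
  | _, _, .nil, _ => .nil
  | _, _, p@(.cons _ _), 0 => p
  | _, _, .cons _ q, n + 1 => wdrop q n

lemma edges_wtake {u v : V} (p : G.Walk u v) (n : ℕ) :
    (wtake p n).edges = p.edges.take n := by
  induction p generalizing n with
  | nil => simp [wtake]
  | cons h q ih =>
    cases n with
    | zero => simp [wtake]; rfl
    | succ n => simp [wtake, ih]

lemma edges_wdrop {u v : V} (p : G.Walk u v) (n : ℕ) :
    (wdrop p n).edges = p.edges.drop n := by
  induction p generalizing n with
  | nil => simp [wdrop]
  | cons h q ih =>
    cases n with
    | zero => simp [wdrop]; rfl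
    | succ n => simp [wdrop, ih]

lemma support_wtake {u v : V} (p : G.Walk u v) (n : ℕ) :
    (wtake p n).support = p.support.take (n + 1) := by
  induction p generalizing n with
  | nil => simp [wtake]
  | cons h q ih =>
    cases n with
    | zero => simp [wtake]; rfl
    | succ n => simp [wtake, ih]

lemma support_wdrop_sublist {u v : V} (p : G.Walk u v) (n : ℕ) :
    (wdrop p n).support.Sublist p.support := by
  induction p generalizing n with
  | nil => simp [wdrop, SimpleGraph.Walk.getVert]
  | cons h q ih =>
    cases n with
    | zero => simp [wdrop]; exact List.Sublist.refl _
    | succ n =>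
      simp only [wdrop, SimpleGraph.Walk.support_cons]
      exact (ih n).cons _

lemma mem_foldl_symmDiff {E' : Type*} [DecidableEq E'] (l : List E') (X : Finset E')
    (a : E') :
    a ∈ l.foldl (fun X e => symmDiff X {e}) X ↔ Xor' (a ∈ X) (Odd (l.count a)) := by
  induction l generalizing X with
  | nil => simp [Xor', Nat.odd_iff, xor_def]
  | cons e l ih =>
    rw [List.foldl_cons, ih]
    rcases eq_or_ne a e with rfl | hne
    · have h1 : (a :: l).count a = l.count a + 1 := by simp [List.count_cons]
      rw [h1, Nat.odd_add_one]
      have h2 : a ∈ symmDiff X {a} ↔ ¬ a ∈ X := by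
        simp [Finset.mem_symmDiff]
      rw [h2]
      simp only [Xor', xor_def]
      tauto
    · have h1 : (e :: l).count a = l.count a := by simp [List.count_cons, hne, Ne.symm hne]
      have h2 : a ∈ symmDiff X {e} ↔ a ∈ X := by
        simp [Finset.mem_symmDiff, hne]
      rw [h1, h2]

lemma count_map_injOn {α β : Type*} [DecidableEq α] [DecidableEq β] (f : α → β)
    (s : Set α) (hf : Set.InjOn f s) (l : List α) (hl : ∀ x ∈ l, x ∈ s)
    (a : α) (ha : a ∈ s) : (l.map f).count (f a) = l.count a := by
  induction l with
  | nil => simp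
  | cons b l ih =>
    have hb : b ∈ s := hl b (List.mem_cons_self)
    have hl' : ∀ x ∈ l, x ∈ s := fun x hx => hl x (List.mem_cons_of_mem _ hx)
    rcases eq_or_ne a b with rfl | hab
    · simp [List.count_cons, ih hl']
    · have : f a ≠ f b := fun h => hab (hf ha hb h)
      simp [List.count_cons, ih hl', hab, this, Ne.symm hab, (Ne.symm this)]

lemma key_toggle {V : Type*} [Fintype V] (G : SimpleGraph V) (hG : G.IsTree)
    (k : ℕ) (κ : Sym2 V → ℕ) (hκ : IsProperEdgeColoring G k κ)
    (hpres : PresentsToggleGroup G k κ)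
    {x y : V} (q : G.Walk x y) (hq : q.IsPath) (h2 : 2 ≤ q.length) :
    ∃ a b : ℕ, a ≠ b ∧ Odd ((q.edges.map κ).count a) ∧ Odd ((q.edges.map κ).count b) := by
  classical
  obtain ⟨E', hF, hD, L', φ, c, hφL, -, hφinj, hcinj, hiff⟩ := hpres
  letI := hF; letI := hD
  -- the basic step along an edge
  have step : ∀ x' y' : V, G.Adj x' y' → φ y' = symmDiff (φ x') {c (κ s(x', y'))} := by
    intro x' y' h
    have he : s(x', y') ∈ G.edgeSet := h
    have hmem := Finset.mem_Icc.mp (hκ.1 _ he)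
    obtain ⟨hne, htog⟩ := (hiff x' y' (κ s(x', y')) hmem.1 hmem.2).mp ⟨h, rfl⟩
    unfold toggle at htog
    split at htog
    · exact htog
    · exact absurd htog.symm hne
  -- fold formula along a walk
  have fold : ∀ {x' y' : V} (r : G.Walk x' y'),
      r.edges.foldl (fun X e => symmDiff X {c (κ e)}) (φ x') = φ y' := by
    intro x' y' r
    induction r with
    | nil => simp
    | cons h r ih =>
      rw [SimpleGraph.Walk.edges_cons, List.foldl_cons, ← step _ _ h]
      exact ih
  set W : List ℕ := q.edges.map κ with hWdef
  set Lst : List E' := W.map c with hLdef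
  have hLq : Lst = q.edges.map (fun e => c (κ e)) := by
    rw [hLdef, hWdef, List.map_map]; rfl
  have memY : ∀ e : E', (e ∈ φ y ↔ Xor' (e ∈ φ x) (Odd (Lst.count e))) := by
    intro e
    have h1 : Lst.foldl (fun X e => symmDiff X {e}) (φ x) = φ y := by
      rw [hLq, List.foldl_map]
      exact fold q
    rw [← h1]
    exact (mem_foldl_symmDiff Lst (φ x) e)
  -- endpoints distinct
  have hxy : x ≠ y := by
    cases q with
    | nil => simp at h2
    | cons h r =>
      have hnd := hq.support_nodup
      rw [SimpleGraph.Walk.support_cons, List.nodup_cons] at hnd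
      exact fun hxy => hnd.1 (hxy ▸ r.end_mem_support)
  have hφxy : φ x ≠ φ y := fun h => hxy (hφinj h)
  -- letters of W lie in [1, k]
  have hW : ∀ a ∈ W, a ∈ Set.Icc 1 k := by
    intro a ha
    obtain ⟨e, he, rfl⟩ := List.mem_map.mp ha
    exact Set.mem_Icc.mpr (Finset.mem_Icc.mp (hκ.1 e (q.edges_subset_edgeSet he)))
  have hcount : ∀ a ∈ Set.Icc 1 k, Lst.count (c a) = W.count a := fun a ha =>
    count_map_injOn c (Set.Icc 1 k) hcinj W hW a ha
  -- there is at least one odd letter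
  have hodd1 : ∃ e : E', Odd (Lst.count e) := by
    by_contra h
    push_neg at h
    apply hφxy
    ext e
    have := memY e
    simp only [h e, Xor', xor_def] at this
    tauto
  obtain ⟨e0, he0⟩ := hodd1
  have he0mem : e0 ∈ Lst := by
    rw [← List.count_pos_iff]
    rcases he0 with ⟨m, hm⟩
    omega
  obtain ⟨a0, ha0W, rfl⟩ := List.mem_map.mp he0mem
  have ha0 : a0 ∈ Set.Icc 1 k := hW a0 ha0W
  by_cases hsecond : ∃ e1 : E', e1 ≠ c a0 ∧ Odd (Lst.count e1)
  · obtain ⟨e1, hne1, he1⟩ := hsecond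
    have he1mem : e1 ∈ Lst := by
      rw [← List.count_pos_iff]
      rcases he1 with ⟨m, hm⟩
      omega
    obtain ⟨a1, ha1W, rfl⟩ := List.mem_map.mp he1mem
    have ha1 : a1 ∈ Set.Icc 1 k := hW a1 ha1W
    refine ⟨a0, a1, fun h => hne1 (by rw [h]), ?_, ?_⟩
    · rw [← hcount a0 ha0]; exact he0
    · rw [← hcount a1 ha1]; exact he1
  · -- single odd element: contradiction with tree structure
    exfalso
    push_neg at hsecond
    have hsd : φ y = symmDiff (φ x) {c a0} := by
      ext e
      rw [memY e, Finset.mem_symmDiff]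
      have hiffe : Odd (Lst.count e) ↔ e = c a0 := by
        constructor
        · intro h
          by_contra hne
          exact (hsecond e hne) h
        · rintro rfl; exact he0
      rw [hiffe]
      simp only [Finset.mem_singleton, Xor', xor_def]
    have htog : φ y = toggle L' (c a0) (φ x) := by
      unfold toggle
      rw [← hsd, if_pos (hφL y)]
    have hadj : G.Adj x y ∧ κ s(x, y) = a0 :=
      (hiff x y a0 (Set.mem_Icc.mp ha0).1 (Set.mem_Icc.mp ha0).2).mpr ⟨hφxy, htog⟩
    -- two distinct paths from x to y in a tree
    have heq := hG.IsAcyclic.path_unique (⟨q, hq⟩ : G.Path x y)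
      (SimpleGraph.Path.singleton hadj.1)
    have h1 : q = (SimpleGraph.Path.singleton hadj.1).val := congrArg Subtype.val heq
    have : q.length = 1 := by rw [h1]; rfl
    omega

end Aux

/-- If a proper edge coloring of a tree presents a generalized toggle
group, then the word of edge colors read along any path of length at least 2 is a toggle
word. -/
theorem stmt_13 {V : Type*} [Fintype V] (G : SimpleGraph V) (hG : G.IsTree)
    (k : ℕ) (κ : Sym2 V → ℕ) (hκ : IsProperEdgeColoring G k κ)
    (hpres : PresentsToggleGroup G k κ)
    (u v : V) (p : G.Walk u v) (hp : p.IsPath) (hlen : 2 ≤ p.length) :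
    IsToggleWord (p.edges.map κ) := by
  intro i j hij
  set q := wtake (wdrop p i) j with hqdef
  have hedges : q.edges = (p.edges.drop i).take j := by
    rw [hqdef, edges_wtake, edges_wdrop]
  have hWq : q.edges.map κ = (((p.edges.map κ).drop i).take j) := by
    rw [hedges]
    simp [List.map_take, List.map_drop]
  have hlenq : 2 ≤ q.length := by
    have h1 : q.edges.length = q.length := q.length_edges
    have h2 : (q.edges.map κ).length = q.edges.length := List.length_map _
    rw [← h1, ← h2, hWq]
    exact hij
  have hqpath : q.IsPath := by
    rw [SimpleGraph.Walk.isPath_def, hqdef, support_wtake]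
    exact (List.take_sublist _ _).nodup
      ((support_wdrop_sublist p i).nodup hp.support_nodup)
  obtain ⟨a, b, hab, ha, hb⟩ := key_toggle G hG k κ hκ hpres q hqpath hlenq
  rw [hWq] at ha hb
  exact ⟨a, b, hab, ha, hb⟩
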